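/- arXiv:1303.0020 — 4 statements merged into one kernel-verified Lean document; each statement's English description precedes it below -/
import Mathlib

section
/- Let D be a club subset of [0,ω₁), let π_D(α) = min(D ∩ [α,ω₁)), and define S_D : C₀(D) → C₀[0,ω₁) by S_D(g) = g ∘ π_D. Then S_D is a well-defined linear isometry, and composing with the restriction map R_D : C₀[0,ω₁) → C₀(D), f ↦ f|_D, one has R_D ∘ S_D = identity on C₀(D). -/
open Set
open scoped ZeroAtInfty

noncomputable section

/-- The first uncountable ordinal ω₁. -/
def omega1 : Ordinal := (Cardinal.aleph 1).ord

/-- The space [0,ω₁) of countable ordinals, with the order topology. -/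
abbrev Omega1 : Type _ := ↥(Set.Iio omega1)

/-- A subset of [0,ω₁) is club if it is closed in the order topology and
unbounded (cofinal). -/
def IsClubSet (D : Set Omega1) : Prop :=
  IsClosed D ∧ ∀ α : Omega1, ∃ β ∈ D, α ≤ β

open Filter Topology

lemma omega1_isLimit : Order.IsSuccLimit omega1 :=
  Cardinal.isSuccLimit_ord (Cardinal.aleph0_le_aleph 1)

instance : Nonempty Omega1 := ⟨⟨0, omega1_isLimit.pos⟩⟩

/-- successor inside Omega1 -/
def osucc (α : Omega1) : Omega1 := ⟨α.val + 1, by rw [Ordinal.add_one_eq_succ]; exact omega1_isLimit.succ_lt α.2⟩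

lemma lt_osucc_iff {x α : Omega1} : x < osucc α ↔ x ≤ α := by
  rw [← Subtype.coe_lt_coe, ← Subtype.coe_le_coe]
  show x.val < α.val + 1 ↔ _
  rw [Ordinal.add_one_eq_succ, Order.lt_succ_iff]

lemma Iic_eq_Iio_osucc (α : Omega1) : Iic α = Iio (osucc α) := by
  ext x; simp [lt_osucc_iff]

lemma isOpen_Iic_omega1 (α : Omega1) : IsOpen (Iic α) := by
  rw [Iic_eq_Iio_osucc]; exact isOpen_Iio

lemma Iic_mem_nhds_omega1 (α : Omega1) : Iic α ∈ 𝓝 α :=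
  (isOpen_Iic_omega1 α).mem_nhds (Set.mem_Iic.mpr le_rfl)

lemma isCompact_Iic_omega1 (β : Omega1) : IsCompact (Iic β) := by
  rw [Topology.IsEmbedding.subtypeVal.isCompact_iff]
  have h : Subtype.val '' (Iic β : Set Omega1) = Icc 0 β.val := by
    ext x
    constructor
    · rintro ⟨y, hy, rfl⟩
      exact ⟨zero_le, Subtype.coe_le_coe.mpr hy⟩
    · rintro ⟨-, hx⟩
      exact ⟨⟨x, lt_of_le_of_lt hx β.2⟩, Set.mem_Iic.mpr (Subtype.coe_le_coe.mp hx), rfl⟩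
  rw [h]
  exact isCompact_Icc

/-- For a club subset D of [0,ω₁) and π_D(α) = min(D ∩ [α,ω₁)), the map
S_D : C₀(D) → C₀[0,ω₁), g ↦ g ∘ π_D, is a well-defined linear isometry, and
composing with the restriction map R_D : C₀[0,ω₁) → C₀(D), f ↦ f|_D, gives
R_D ∘ S_D = id on C₀(D). -/
theorem SD_linear_isometry_and_RD_SD_eq_id {D : Set Omega1} (hD : IsClubSet D)
    (π : Omega1 → Omega1) (hπD : ∀ α, π α ∈ D)
    (hπ : ∀ α : Omega1, α ≤ π α ∧ ∀ β ∈ D, α ≤ β → π α ≤ β) :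
    ∃ (S : C₀(↥D, ℝ) →ₗᵢ[ℝ] C₀(Omega1, ℝ))
      (R : C₀(Omega1, ℝ) →ₗ[ℝ] C₀(↥D, ℝ)),
      (∀ (g : C₀(↥D, ℝ)) (α : Omega1), S g α = g ⟨π α, hπD α⟩) ∧
      (∀ (f : C₀(Omega1, ℝ)) (β : ↥D), R f β = f ↑β) ∧
      (∀ g : C₀(↥D, ℝ), R (S g) = g) := by
  -- π is monotone
  have hmono : Monotone π := by
    intro x y hxy
    exact (hπ x).2 (π y) (hπD y) (hxy.trans (hπ y).1)
  -- π fixes D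
  have hfix : ∀ d : Omega1, d ∈ D → π d = d := fun d hd =>
    le_antisymm ((hπ d).2 d hd le_rfl) (hπ d).1
  -- π is continuous
  have hcont : Continuous π := by
    rw [continuous_iff_continuousAt]
    intro α
    rw [ContinuousAt, tendsto_order]
    constructor
    · intro b hb
      rcases lt_or_ge b α with h | h
      · filter_upwards [Ioi_mem_nhds h] with x hx
        exact lt_of_lt_of_le hx (hπ x).1
      · -- α ≤ b < π α, so α ∉ D
        have hαD : α ∉ D := by
          intro hmem
          have := hfix α hmem
          rw [this] at hb
          exact absurd (h.trans_lt hb) (lt_irrefl α)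
        have hDc : Dᶜ ∈ 𝓝 α := hD.1.isOpen_compl.mem_nhds hαD
        by_cases hbot : ∃ l, l < α
        · obtain ⟨s, hs, hIoc⟩ := exists_Ioc_subset_of_mem_nhds hDc hbot
          have hmemIoc : Ioc s α ∈ 𝓝 α := by
            have : Ioc s α = Ioo s (osucc α) := by
              ext x; simp [mem_Ioc, mem_Ioo, lt_osucc_iff]
            rw [this]
            exact isOpen_Ioo.mem_nhds ⟨hs, lt_osucc_iff.mpr le_rfl⟩
          filter_upwards [hmemIoc] with x hx
          have hπxα : α < π x := by
            by_contra hle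
            push_neg at hle
            exact hIoc ⟨lt_of_lt_of_le hx.1 (hπ x).1, hle⟩ (hπD x)
          exact lt_of_lt_of_le hb ((hπ α).2 (π x) (hπD x) hπxα.le)
        · push_neg at hbot
          filter_upwards [Iic_mem_nhds_omega1 α] with x hx
          have : x = α := le_antisymm hx (hbot x)
          rw [this]; exact hb
    · intro b hb
      filter_upwards [Iic_mem_nhds_omega1 α] with x hx
      exact lt_of_le_of_lt (hmono hx) hb
  -- the maps as cocompact maps
  have hπcc : Tendsto (fun α : Omega1 => (⟨π α, hπD α⟩ : ↥D))
      (cocompact Omega1) (cocompact ↥D) := by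
    rw [hasBasis_cocompact.tendsto_iff hasBasis_cocompact]
    intro K hK
    rcases K.eq_empty_or_nonempty with rfl | hne
    · exact ⟨∅, isCompact_empty, fun x _ => by simp⟩
    · have hKv : IsCompact (Subtype.val '' K) := hK.image continuous_subtype_val
      obtain ⟨β, hβ⟩ := hKv.bddAbove
      refine ⟨Iic β, isCompact_Iic_omega1 β, fun x hx => ?_⟩
      simp only [mem_compl_iff, mem_Iic] at hx ⊢
      intro hmem
      have : π x ≤ β := hβ ⟨⟨π x, hπD x⟩, hmem, rfl⟩
      exact hx (((hπ x).1.trans this))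
  have hιcc : Tendsto (Subtype.val : ↥D → Omega1)
      (cocompact ↥D) (cocompact Omega1) := by
    rw [hasBasis_cocompact.tendsto_iff hasBasis_cocompact]
    intro K hK
    refine ⟨Subtype.val ⁻¹' K, ?_, fun x hx => hx⟩
    rw [Topology.IsEmbedding.subtypeVal.isCompact_iff]
    have : Subtype.val '' (Subtype.val ⁻¹' K : Set ↥D) = K ∩ D := by
      ext x
      constructor
      · rintro ⟨y, hy, rfl⟩; exact ⟨hy, y.2⟩
      · rintro ⟨hx, hxD⟩; exact ⟨⟨x, hxD⟩, hx, rfl⟩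
    rw [this]
    exact hK.inter_right hD.1
  let πc : CocompactMap Omega1 ↥D :=
    ⟨⟨fun α => ⟨π α, hπD α⟩, hcont.subtype_mk _⟩, hπcc⟩
  let ιc : CocompactMap ↥D Omega1 := ⟨⟨Subtype.val, continuous_subtype_val⟩, hιcc⟩
  let S₀ : C₀(↥D, ℝ) →ₗ[ℝ] C₀(Omega1, ℝ) := ZeroAtInftyContinuousMap.compLinearMap πc
  let R : C₀(Omega1, ℝ) →ₗ[ℝ] C₀(↥D, ℝ) := ZeroAtInftyContinuousMap.compLinearMap ιc
  have hS₀ : ∀ (g : C₀(↥D, ℝ)) (α : Omega1), S₀ g α = g ⟨π α, hπD α⟩ := fun g α => rfl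
  have hR : ∀ (f : C₀(Omega1, ℝ)) (β : ↥D), R f β = f ↑β := fun f β => rfl
  have hnorm : ∀ g : C₀(↥D, ℝ), ‖S₀ g‖ = ‖g‖ := by
    intro g
    rw [← ZeroAtInftyContinuousMap.norm_toBCF_eq_norm,
      ← ZeroAtInftyContinuousMap.norm_toBCF_eq_norm]
    apply le_antisymm
    · rw [BoundedContinuousFunction.norm_le (norm_nonneg _)]
      intro x
      exact BoundedContinuousFunction.norm_coe_le_norm g.toBCF ⟨π x, hπD x⟩
    · rw [BoundedContinuousFunction.norm_le (norm_nonneg _)]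
      intro d
      have : g d = (S₀ g) ↑d := by
        rw [hS₀, show (⟨π ↑d, hπD ↑d⟩ : ↥D) = d from Subtype.ext (hfix d.val d.2)]
      rw [show (g.toBCF) d = g d from rfl, this]
      exact BoundedContinuousFunction.norm_coe_le_norm (S₀ g).toBCF ↑d
  refine ⟨⟨S₀, hnorm⟩, R, hS₀, hR, fun g => ?_⟩
  ext d
  show (S₀ g) ↑d = g d
  rw [hS₀, show (⟨π ↑d, hπD ↑d⟩ : ↥D) = d from Subtype.ext (hfix d.val d.2)]

end
end

section
/- For club subsets D and E of [0,ω₁), the ranges of the projections P_D and P_E on C₀[0,ω₁) satisfy range(P_D) ∩ range(P_E) = range(P_{D∩E}), where P_D f = (f|_D) ∘ π_D and π_D(α) = min(D ∩ [α,ω₁)). -/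
open Set
open scoped ZeroAtInfty

noncomputable section

/-- π is the function α ↦ min(D ∩ [α,ω₁)). -/
def IsMinMap (D : Set Omega1) (π : Omega1 → Omega1) : Prop :=
  ∀ α : Omega1, π α ∈ D ∧ α ≤ π α ∧ ∀ β ∈ D, α ≤ β → π α ≤ β

/-- P is the operator P_D : f ↦ (f|_D) ∘ π_D on C₀[0,ω₁). -/
def IsClubProjection (D : Set Omega1) (P : C₀(Omega1, ℝ) →L[ℝ] C₀(Omega1, ℝ)) : Prop :=
  ∃ π : Omega1 → Omega1, IsMinMap D π ∧
    ∀ (f : C₀(Omega1, ℝ)) (α : Omega1), P f α = f (π α)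

lemma IsMinMap.idem {S : Set Omega1} {π : Omega1 → Omega1} (hπ : IsMinMap S π) (x : Omega1) :
    π (π x) = π x :=
  le_antisymm ((hπ (π x)).2.2 (π x) (hπ x).1 le_rfl) (hπ (π x)).2.1

lemma mem_range_proj {S : Set Omega1} {π : Omega1 → Omega1} (hπ : IsMinMap S π)
    {T : C₀(Omega1, ℝ) →L[ℝ] C₀(Omega1, ℝ)} (hT : ∀ f α, T f α = f (π α))
    (f : C₀(Omega1, ℝ)) : f ∈ LinearMap.range (T : C₀(Omega1, ℝ) →ₗ[ℝ] C₀(Omega1, ℝ)) ↔ ∀ x, f (π x) = f x := by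
  constructor
  · rintro ⟨g, rfl⟩ x
    show (T g) (π x) = (T g) x
    rw [hT, hT, hπ.idem]
  · intro h
    refine ⟨f, ?_⟩
    show T f = f
    ext x
    rw [hT, h]

lemma minmap_comp {S T : Set Omega1} {π σ : Omega1 → Omega1} (hπ : IsMinMap S π)
    (hσ : IsMinMap T σ) (hTS : T ⊆ S) (x : Omega1) : σ (π x) = σ x := by
  have h1 : π x ≤ σ x := (hπ x).2.2 (σ x) (hTS (hσ x).1) (hσ x).2.1
  exact le_antisymm ((hσ (π x)).2.2 (σ x) (hσ x).1 h1)
    ((hσ x).2.2 _ (hσ (π x)).1 (le_trans (hπ x).2.1 (hσ (π x)).2.1))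

lemma const_on_inter {D E : Set Omega1} (hDc : IsClosed D) (hEc : IsClosed E)
    {πD πE πR : Omega1 → Omega1} (hπD : IsMinMap D πD) (hπE : IsMinMap E πE)
    (hπR : IsMinMap (D ∩ E) πR) (f : C₀(Omega1, ℝ))
    (hfD : ∀ x, f (πD x) = f x) (hfE : ∀ x, f (πE x) = f x) (α : Omega1) :
    f (πR α) = f α := by
  set δ : Omega1 := πR α with hδ
  have hδDE : δ ∈ D ∩ E := (hπR α).1
  -- the alternating iteration
  let a : ℕ → Omega1 := fun n => Nat.rec α (fun _ x => πE (πD x)) n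
  have ha0 : a 0 = α := rfl
  have haS : ∀ n, a (n + 1) = πE (πD (a n)) := fun n => rfl
  have hstep : ∀ n, a n ≤ a (n + 1) := fun n =>
    le_trans (hπD (a n)).2.1 (hπE (πD (a n))).2.1
  have hmono : Monotone a := monotone_nat_of_le_succ hstep
  have hbound : ∀ n, a n ≤ δ := by
    intro n
    induction n with
    | zero => exact (hπR α).2.1
    | succ n ih =>
      rw [haS]
      exact (hπE (πD (a n))).2.2 δ hδDE.2 ((hπD (a n)).2.2 δ hδDE.1 ih)
  -- sup of the ordinal values
  have hmono' : Monotone fun n => (a n).1 := fun m n h =>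
    Subtype.coe_le_coe.mpr (hmono h)
  have hbdd : BddAbove (Set.range fun n => (a n).1) := by
    refine ⟨(δ : Ordinal), ?_⟩
    rintro _ ⟨n, rfl⟩
    exact Subtype.coe_le_coe.mpr (hbound n)
  set γ₀ : Ordinal := ⨆ n, (a n).1 with hγ₀
  have hγle : γ₀ ≤ (δ : Ordinal) := ciSup_le fun n => Subtype.coe_le_coe.mpr (hbound n)
  have hγlt : γ₀ < omega1 := lt_of_le_of_lt hγle δ.2
  set γ : Omega1 := ⟨γ₀, hγlt⟩ with hγ
  have htend0 : Filter.Tendsto (fun n => (a n).1) Filter.atTop (nhds γ₀) :=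
    tendsto_atTop_ciSup hmono' hbdd
  have htend : Filter.Tendsto a Filter.atTop (nhds γ) :=
    tendsto_subtype_rng.mpr htend0
  -- π_D ∘ a tends to γ as well (squeeze), so γ ∈ D
  have htendshift : Filter.Tendsto (fun n => (a (n + 1)).1)
      Filter.atTop (nhds γ₀) := htend0.comp (Filter.tendsto_add_atTop_nat 1)
  have htendD0 : Filter.Tendsto (fun n => (πD (a n)).1)
      Filter.atTop (nhds γ₀) := by
    refine tendsto_of_tendsto_of_tendsto_of_le_of_le htend0 htendshift ?_ ?_
    · exact fun n => Subtype.coe_le_coe.mpr (hπD (a n)).2.1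
    · exact fun n => Subtype.coe_le_coe.mpr (hπE (πD (a n))).2.1
  have htendD : Filter.Tendsto (fun n => πD (a n)) Filter.atTop (nhds γ) :=
    tendsto_subtype_rng.mpr htendD0
  have hγD : γ ∈ D := by
    have := mem_closure_of_tendsto htendD
      (Filter.Eventually.of_forall fun n => (hπD (a n)).1)
    rwa [hDc.closure_eq] at this
  have htendE : Filter.Tendsto (fun n => a (n + 1)) Filter.atTop (nhds γ) :=
    tendsto_subtype_rng.mpr htendshift
  have hγE : γ ∈ E := by
    have := mem_closure_of_tendsto htendE
      (Filter.Eventually.of_forall fun n => (hπE (πD (a n))).1)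
    rwa [hEc.closure_eq] at this
  -- γ = δ
  have hαγ : α ≤ γ := Subtype.coe_le_coe.mp (le_ciSup hbdd 0)
  have hγδ : γ = δ := le_antisymm (Subtype.coe_le_coe.mp hγle)
    ((hπR α).2.2 γ ⟨hγD, hγE⟩ hαγ)
  -- f constant along the iteration
  have hconst : ∀ n, f (a n) = f α := by
    intro n
    induction n with
    | zero => rfl
    | succ n ih => rw [haS, hfE, hfD, ih]
  have hfγ : f γ = f α := by
    have h1 : Filter.Tendsto (fun n => f (a n)) Filter.atTop (nhds (f γ)) :=
      (f.continuous.tendsto γ).comp htend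
    have h2 : Filter.Tendsto (fun n => f (a n)) Filter.atTop (nhds (f α)) := by
      simp only [hconst]
      exact tendsto_const_nhds
    exact tendsto_nhds_unique h1 h2
  rw [← hγδ]
  exact hfγ

/-- For club subsets D and E of [0,ω₁),
range P_D ∩ range P_E = range P_{D∩E}. -/
theorem range_PD_inter_range_PE {D E : Set Omega1} (hD : IsClubSet D) (hE : IsClubSet E)
    {P Q R : C₀(Omega1, ℝ) →L[ℝ] C₀(Omega1, ℝ)}
    (hP : IsClubProjection D P) (hQ : IsClubProjection E Q)
    (hR : IsClubProjection (D ∩ E) R) :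
    (LinearMap.range (P : C₀(Omega1, ℝ) →ₗ[ℝ] C₀(Omega1, ℝ)) ⊓
      LinearMap.range (Q : C₀(Omega1, ℝ) →ₗ[ℝ] C₀(Omega1, ℝ)) : Submodule ℝ C₀(Omega1, ℝ)) =
      LinearMap.range (R : C₀(Omega1, ℝ) →ₗ[ℝ] C₀(Omega1, ℝ)) := by
  obtain ⟨πD, hπD, hPapp⟩ := hP
  obtain ⟨πE, hπE, hQapp⟩ := hQ
  obtain ⟨πR, hπR, hRapp⟩ := hR
  ext f
  rw [Submodule.mem_inf, mem_range_proj hπD hPapp, mem_range_proj hπE hQapp,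
    mem_range_proj hπR hRapp]
  constructor
  · rintro ⟨h1, h2⟩ x
    exact const_on_inter hD.1 hE.1 hπD hπE hπR f h1 h2 x
  · intro h
    constructor
    · intro x
      calc f (πD x) = f (πR (πD x)) := (h _).symm
        _ = f (πR x) := by rw [minmap_comp hπD hπR inter_subset_left]
        _ = f x := h x
    · intro x
      calc f (πE x) = f (πR (πE x)) := (h _).symm
        _ = f (πR x) := by rw [minmap_comp hπE hπR inter_subset_right]
        _ = f x := h x

end
end

section
/- Let θ : [0,ω₁] → K be a continuous map into a Hausdorff space K. Then exactly one of the following holds: (i) [0,ω₁] contains a closed uncountable subset D on which θ is constant; (ii) [0,ω₁] contains a closed uncountable subset E on which θ is injective. -/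
open Set

noncomputable section

/-- The compact ordinal interval [0,ω₁], with the order topology. -/
abbrev Omega1' : Type _ := ↥(Set.Iic omega1)

namespace MyAux

open Ordinal Cardinal

universe u

lemma omega1_ne_zero : (omega1.{u}) ≠ 0 := by
  simp only [omega1, ne_eq, Cardinal.ord_eq_zero]
  exact (Cardinal.aleph_pos 1).ne'

lemma cof_omega1 : (omega1.{u}).cof = Cardinal.aleph 1 :=
  Cardinal.isRegular_aleph_one.cof_eq

lemma isLimit_omega1 : Order.IsSuccLimit (omega1.{u}) :=
  Cardinal.isSuccLimit_ord (Cardinal.aleph0_le_aleph 1)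

lemma countable_Iic {β : Ordinal.{u}} (h : β < omega1) : (Set.Iic β).Countable := by
  rw [Cardinal.countable_iff_lt_aleph_one, ← Order.Iio_succ, Ordinal.mk_Iio_ordinal]
  have : (Order.succ β).card < Cardinal.aleph 1 := by
    rw [← Cardinal.lt_ord]
    exact (isLimit_omega1).succ_lt h
  calc Cardinal.lift.{u+1} (Order.succ β).card
      < Cardinal.lift.{u+1} (Cardinal.aleph 1) := Cardinal.lift_lt.2 this
    _ = Cardinal.aleph 1 := by simp

/-- A countable set of ordinals `< ω₁` is bounded strictly below ω₁. -/
lemma bound_of_countable (S : Set Ordinal.{u}) (hS : S.Countable) (h : S ⊆ Iio omega1) :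
    ∃ γ, γ < omega1 ∧ ∀ x ∈ S, x ≤ γ := by
  have hsmall : Small.{u} S := small_subset h
  have hc : Countable S := hS.to_subtype
  have hctble : Countable (Shrink.{u} S) := (equivShrink S).countable_iff.1 hc
  set f : Shrink.{u} S → Ordinal.{u} := fun i => ((equivShrink S).symm i : Ordinal) with hf
  refine ⟨iSup f, ?_, ?_⟩
  · apply Ordinal.iSup_lt_ord
    · rw [cof_omega1]
      exact (Cardinal.mk_le_aleph0).trans_lt Cardinal.aleph0_lt_aleph_one
    · exact fun i => h ((equivShrink S).symm i).2
  · intro x hx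
    have := Ordinal.le_iSup f (equivShrink S ⟨x, hx⟩)
    simpa [hf] using this

end MyAux

namespace MyAux
open Ordinal Cardinal
universe v

lemma unbounded_of_not_countable (S : Set Ordinal.{v}) (hS : ¬ S.Countable)
    (h : S ⊆ Iic omega1.{v}) : ∀ β < omega1.{v}, ∃ x ∈ S, β < x ∧ x < omega1 := by
  intro β hβ
  by_contra hcon
  push_neg at hcon
  apply hS
  have hsub : S ⊆ Set.Iic β ∪ {omega1} := by
    intro x hx
    have hxle : x ≤ omega1.{v} := h hx
    rcases lt_or_eq_of_le hxle with hlt | heq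
    · exact Or.inl (le_of_not_gt fun hbx => absurd (hcon x hx hbx) (not_le.2 hlt))
    · exact Or.inr heq
  exact Set.Countable.mono hsub ((countable_Iic hβ).union (Set.countable_singleton _))

end MyAux

namespace MyAux
open Ordinal Cardinal
universe w

lemma top_mem_of_closed_unbounded (S : Set Ordinal.{w}) (hcl : IsClosed S)
    (h : ∀ β < omega1.{w}, ∃ x ∈ S, β < x ∧ x < omega1) : omega1.{w} ∈ S := by
  have hchoice : ∀ β (hβ : β < omega1.{w}), ∃ x, x ∈ S ∧ β < x ∧ x < omega1 := by
    intro β hβ; simpa using h β hβ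
  rw [Ordinal.mem_closed_iff_bsup hcl]
  refine ⟨omega1, omega1_ne_zero, fun β hβ => (hchoice β hβ).choose, fun β hβ =>
    (hchoice β hβ).choose_spec.1, ?_⟩
  apply le_antisymm
  · exact Ordinal.bsup_le fun i hi => ((hchoice i hi).choose_spec.2.2).le
  · apply le_of_forall_lt
    intro c hc
    exact lt_of_lt_of_le (hchoice c hc).choose_spec.2.1 (Ordinal.le_bsup _ c hc)

lemma exists_common_lt (S T : Set Ordinal.{w}) (hS : IsClosed S) (hT : IsClosed T)
    (huS : ∀ β < omega1.{w}, ∃ x ∈ S, β < x ∧ x < omega1)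
    (huT : ∀ β < omega1.{w}, ∃ x ∈ T, β < x ∧ x < omega1) :
    ∃ x, x < omega1.{w} ∧ x ∈ S ∧ x ∈ T := by
  have hzero : (0 : Ordinal.{w}) < omega1 := pos_iff_ne_zero.2 omega1_ne_zero
  have hS' : ∀ β : Ordinal.{w}, ∃ x, x ∈ S ∧ x < omega1 ∧ β < omega1 → True := fun _ => ⟨0, by simp⟩
  -- real choice functions
  have hSc : ∀ β : Ordinal.{w}, ∃ x, x ∈ S ∧ x < omega1 ∧ (β < omega1 → β < x) := by
    intro β
    rcases lt_or_ge β omega1 with hβ | hβ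
    · obtain ⟨x, hx, h1, h2⟩ := huS β hβ
      exact ⟨x, hx, h2, fun _ => h1⟩
    · obtain ⟨x, hx, h1, h2⟩ := huS 0 hzero
      exact ⟨x, hx, h2, fun hc => absurd hc (not_lt.2 hβ)⟩
  have hTc : ∀ β : Ordinal.{w}, ∃ x, x ∈ T ∧ x < omega1 ∧ (β < omega1 → β < x) := by
    intro β
    rcases lt_or_ge β omega1 with hβ | hβ
    · obtain ⟨x, hx, h1, h2⟩ := huT β hβ
      exact ⟨x, hx, h2, fun _ => h1⟩
    · obtain ⟨x, hx, h1, h2⟩ := huT 0 hzero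
      exact ⟨x, hx, h2, fun hc => absurd hc (not_lt.2 hβ)⟩
  choose fS hfS1 hfS2 hfS3 using hSc
  choose fT hfT1 hfT2 hfT3 using hTc
  set a : ℕ → Ordinal.{w} := fun n => Nat.rec (fS 0) (fun _ ih => fS (fT ih)) n with ha
  set b : ℕ → Ordinal.{w} := fun n => fT (a n) with hb
  have haS : ∀ n, a n ∈ S := by intro n; cases n <;> exact hfS1 _
  have haO : ∀ n, a n < omega1 := by intro n; cases n <;> exact hfS2 _
  have hbT : ∀ n, b n ∈ T := fun n => hfT1 _
  have hbO : ∀ n, b n < omega1 := fun n => hfT2 _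
  have hab : ∀ n, a n < b n := fun n => hfT3 _ (haO n)
  have hba : ∀ n, b n < a (n + 1) := fun n => hfS3 _ (hbO n)
  set FA : ULift.{w} ℕ → Ordinal.{w} := fun k => a k.down with hFA
  set FB : ULift.{w} ℕ → Ordinal.{w} := fun k => b k.down with hFB
  have hsup_eq : iSup FA = iSup FB := by
    apply le_antisymm
    · exact Ordinal.iSup_le fun k => (hab k.down).le.trans (Ordinal.le_iSup FB k)
    · exact Ordinal.iSup_le fun k => (hba k.down).le.trans (Ordinal.le_iSup FA ⟨k.down + 1⟩)
  have hlt : iSup FA < omega1 := by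
    apply Ordinal.iSup_lt_ord
    · rw [cof_omega1]
      exact (Cardinal.mk_le_aleph0).trans_lt Cardinal.aleph0_lt_aleph_one
    · exact fun k => haO k.down
  refine ⟨iSup FA, hlt, ?_, ?_⟩
  · exact (Ordinal.mem_iff_iSup_of_isClosed hS).2 ⟨ULift ℕ, ⟨⟨0⟩⟩, FA, fun k => haS k.down, rfl⟩
  · rw [hsup_eq]
    exact (Ordinal.mem_iff_iSup_of_isClosed hT).2 ⟨ULift ℕ, ⟨⟨0⟩⟩, FB, fun k => hbT k.down, rfl⟩

end MyAux

namespace MyAux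
open Ordinal Cardinal

section Excl
universe u
variable {K : Type*} [TopologicalSpace K] [T2Space K]

lemma image_val_closed {D : Set Omega1'.{u}} (hD : IsClosed D) :
    IsClosed (Subtype.val '' D : Set Ordinal.{u}) :=
  (isClosed_Iic.isClosedEmbedding_subtypeVal).isClosedMap _ hD

lemma image_val_not_countable {D : Set Omega1'.{u}} (hD : ¬D.Countable) :
    ¬(Subtype.val '' D : Set Ordinal.{u}).Countable := fun hc =>
  hD (((hc.preimage Subtype.val_injective)).mono (Set.subset_preimage_image _ _))

lemma image_val_subset_Iic (D : Set Omega1'.{u}) :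
    (Subtype.val '' D : Set Ordinal.{u}) ⊆ Set.Iic omega1 := by
  rintro x ⟨d, _, rfl⟩
  exact d.2

lemma exclusive (θ : Omega1'.{u} → K)
    (D : Set Omega1'.{u}) (hDc : IsClosed D) (hDu : ¬D.Countable)
    (hDconst : ∀ x ∈ D, ∀ y ∈ D, θ x = θ y)
    (E : Set Omega1'.{u}) (hEc : IsClosed E) (hEu : ¬E.Countable)
    (hEinj : Set.InjOn θ E) : False := by
  set D' := (Subtype.val '' D : Set Ordinal.{u}) with hD'
  set E' := (Subtype.val '' E : Set Ordinal.{u}) with hE'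
  have hD'cl := image_val_closed hDc
  have hE'cl := image_val_closed hEc
  have hD'unb := unbounded_of_not_countable D' (image_val_not_countable hDu)
    (image_val_subset_Iic D)
  have hE'unb := unbounded_of_not_countable E' (image_val_not_countable hEu)
    (image_val_subset_Iic E)
  have hωD : omega1.{u} ∈ D' := top_mem_of_closed_unbounded D' hD'cl hD'unb
  have hωE : omega1.{u} ∈ E' := top_mem_of_closed_unbounded E' hE'cl hE'unb
  obtain ⟨x, hxlt, hxD, hxE⟩ := exists_common_lt D' E' hD'cl hE'cl hD'unb hE'unb
  -- subtype elements
  set px : Omega1'.{u} := ⟨x, hxlt.le⟩ with hpx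
  set pω : Omega1'.{u} := ⟨omega1, Set.mem_Iic.2 le_rfl⟩ with hpω
  have hpxD : px ∈ D := by
    obtain ⟨d, hd, hdv⟩ := hxD
    rwa [show px = d from Subtype.ext hdv.symm]
  have hpxE : px ∈ E := by
    obtain ⟨d, hd, hdv⟩ := hxE
    rwa [show px = d from Subtype.ext hdv.symm]
  have hpωD : pω ∈ D := by
    obtain ⟨d, hd, hdv⟩ := hωD
    rwa [show pω = d from Subtype.ext hdv.symm]
  have hpωE : pω ∈ E := by
    obtain ⟨d, hd, hdv⟩ := hωE
    rwa [show pω = d from Subtype.ext hdv.symm]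
  have hval : θ px = θ pω := hDconst _ hpxD _ hpωD
  have : px = pω := hEinj hpxE hpωE hval
  have : x = omega1 := congrArg Subtype.val this
  exact absurd this hxlt.ne

end Excl
end MyAux

namespace MyAux
open Ordinal Cardinal
universe u

lemma club_unbounded (g : Ordinal.{u} → Ordinal.{u}) (hg : ∀ β, g β < omega1.{u})
    (γ : Ordinal.{u}) (hγ : γ < omega1.{u}) :
    ∃ x, γ < x ∧ x < omega1.{u} ∧ (∀ β < x, g β < x) ∧ g omega1.{u} < x := by
  set h : Ordinal.{u} → Ordinal.{u} := fun x =>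
    Order.succ (x ⊔ Ordinal.bsup.{u,u} (Order.succ x) (fun β _ => g β)) with hhdef
  have hxh : ∀ x, x < h x := fun x =>
    lt_of_le_of_lt le_sup_left (Order.lt_succ _)
  have hhlt : ∀ x, x < omega1 → h x < omega1 := by
    intro x hx
    apply isLimit_omega1.succ_lt
    apply max_lt hx
    apply Ordinal.bsup_lt_ord
    · rw [cof_omega1, ← Cardinal.lt_ord]
      exact isLimit_omega1.succ_lt hx
    · exact fun i _ => hg i
  have hgb : ∀ x β, β ≤ x → g β < h x := by
    intro x β hβ
    apply lt_of_le_of_lt _ (Order.lt_succ _)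
    exact le_trans (Ordinal.le_bsup (fun β _ => g β) β (Order.lt_succ_iff.2 hβ)) le_sup_right
  set c : ℕ → Ordinal.{u} := fun n => Nat.rec (Order.succ (γ ⊔ g omega1)) (fun _ ih => h ih) n
    with hcdef
  have hc0 : c 0 = Order.succ (γ ⊔ g omega1) := rfl
  have hcs : ∀ n, c (n + 1) = h (c n) := fun n => rfl
  have hclt : ∀ n, c n < omega1 := by
    intro n
    induction n with
    | zero => exact isLimit_omega1.succ_lt (max_lt hγ (hg omega1))
    | succ n ih => rw [hcs]; exact hhlt _ ih
  have hcmono : StrictMono c := strictMono_nat_of_lt_succ fun n => by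
    rw [hcs]; exact hxh _
  set F : ULift.{u} ℕ → Ordinal.{u} := fun k => c k.down with hFdef
  have hsuplt : iSup F < omega1 := by
    apply Ordinal.iSup_lt_ord
    · rw [cof_omega1]
      exact (Cardinal.mk_le_aleph0).trans_lt Cardinal.aleph0_lt_aleph_one
    · exact fun k => hclt k.down
  refine ⟨iSup F, ?_, hsuplt, ?_, ?_⟩
  · calc γ ≤ γ ⊔ g omega1 := le_sup_left
      _ < c 0 := Order.lt_succ _
      _ ≤ iSup F := Ordinal.le_iSup F ⟨0⟩
  · intro β hβ
    obtain ⟨k, hk⟩ := (Ordinal.lt_iSup_iff).1 hβ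
    calc g β < h (c k.down) := hgb _ _ hk.le
      _ = c (k.down + 1) := (hcs _).symm
      _ ≤ iSup F := Ordinal.le_iSup F ⟨k.down + 1⟩
  · calc g omega1 ≤ γ ⊔ g omega1 := le_sup_right
      _ < c 0 := Order.lt_succ _
      _ ≤ iSup F := Ordinal.le_iSup F ⟨0⟩

end MyAux


/-- For every continuous map θ from [0,ω₁] into a Hausdorff space K, exactly
one of the following holds: (i) there is a closed uncountable subset of
[0,ω₁] on which θ is constant; (ii) there is a closed uncountable subset of
[0,ω₁] on which θ is injective. -/

theorem constant_or_injective_on_closed_uncountable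
    {K : Type*} [TopologicalSpace K] [T2Space K]
    (θ : Omega1' → K) (hθ : Continuous θ) :
    Xor'
      (∃ D : Set Omega1', IsClosed D ∧ ¬D.Countable ∧
        ∀ x ∈ D, ∀ y ∈ D, θ x = θ y)
      (∃ E : Set Omega1', IsClosed E ∧ ¬E.Countable ∧ Set.InjOn θ E) := by
  by_cases hY : ∃ y : K, ¬(θ ⁻¹' {y}).Countable
  · -- some fiber uncountable: constant case
    obtain ⟨y, hy⟩ := hY
    refine Or.inl ⟨⟨θ ⁻¹' {y}, IsClosed.preimage hθ isClosed_singleton, hy, ?_⟩, ?_⟩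
    · intro a ha b hb
      simp only [Set.mem_preimage, Set.mem_singleton_iff] at ha hb
      rw [ha, hb]
    · rintro ⟨E, hEc, hEu, hEinj⟩
      exact MyAux.exclusive θ _ (IsClosed.preimage hθ isClosed_singleton) hy
        (fun a ha b hb => by
          simp only [Set.mem_preimage, Set.mem_singleton_iff] at ha hb
          rw [ha, hb]) E hEc hEu hEinj
  · -- all fibers countable: injective case
    push_neg at hY
    set Θ : Ordinal → K := fun β => θ ⟨min β omega1, Set.mem_Iic.2 (min_le_right _ _)⟩ with hΘdef
    have hΘ : ∀ (β : Ordinal) (hβ : β ≤ omega1), Θ β = θ ⟨β, hβ⟩ := by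
      intro β hβ
      exact congrArg θ (Subtype.ext (min_eq_left hβ))
    have hgex : ∀ β : Ordinal, ∃ γ, γ < omega1 ∧
        ∀ α, α < omega1 → Θ α = Θ β → α ≤ γ := by
      intro β
      have hsub : {α : Ordinal | α < omega1 ∧ Θ α = Θ β} ⊆
          Subtype.val '' (θ ⁻¹' {Θ β}) := by
        rintro α ⟨h1, h2⟩
        exact ⟨⟨α, h1.le⟩, by
          simp only [Set.mem_preimage, Set.mem_singleton_iff]
          rw [← hΘ α h1.le, h2], rfl⟩
      obtain ⟨γ, hγ1, hγ2⟩ := MyAux.bound_of_countable _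
        (((hY (Θ β)).image Subtype.val).mono hsub) (fun α hα => hα.1)
      exact ⟨γ, hγ1, fun α h1 h2 => hγ2 α ⟨h1, h2⟩⟩
    choose g hg1 hg2 using hgex
    set S : Set Ordinal := ⋂ β : Ordinal, (Set.Iic β ∪ Set.Ici (Order.succ (g β))) with hSdef
    have hSmem : ∀ x : Ordinal, x ∈ S ↔ ∀ β, β < x → g β < x := by
      intro x
      simp only [hSdef, Set.mem_iInter, Set.mem_union, Set.mem_Iic, Set.mem_Ici,
        Order.succ_le_iff]
      constructor
      · intro h β hβ
        rcases h β with h' | h'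
        · exact absurd hβ (not_lt.2 h')
        · exact h'
      · intro h β
        rcases le_or_gt x β with h' | h'
        · exact Or.inl h'
        · exact Or.inr (h β h')
    have hScl : IsClosed S :=
      isClosed_iInter fun β => isClosed_Iic.union isClosed_Ici
    set S' : Set Ordinal := S ∩ Set.Ici (Order.succ (g omega1)) with hS'def
    have hS'cl : IsClosed S' := hScl.inter isClosed_Ici
    set E : Set Omega1' := Subtype.val ⁻¹' S' with hEdef
    have hEcl : IsClosed E := hS'cl.preimage continuous_subtype_val
    -- injectivity
    have hkey : ∀ x ∈ E, ∀ y ∈ E, θ x = θ y → (x : Ordinal) < (y : Ordinal) → False := by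
      intro x hx y hy hxy hlt
      have hxS : (x : Ordinal) ∈ S := hx.1
      have hyS : (y : Ordinal) ∈ S := hy.1
      have hvx : (x : Ordinal) < omega1 := lt_of_lt_of_le hlt y.2
      have hΘx : Θ x = θ x := by rw [hΘ _ x.2]
      have hΘy : Θ y = θ y := by rw [hΘ _ y.2]
      rcases lt_or_eq_of_le (Set.mem_Iic.1 y.2) with hvy | hvy
      · -- y < ω₁ : use pressure between the two fibers
        have h1 : (y : Ordinal) ≤ g x := hg2 x y hvy (by rw [hΘx, hΘy, hxy])
        have h2 : g x < y := (hSmem _).1 hyS x hlt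
        exact absurd h1 (not_le.2 h2)
      · -- y = ω₁
        have h1 : (x : Ordinal) ≤ g omega1 := by
          apply hg2 omega1 x hvx
          rw [hΘx, hxy, ← hΘy, hvy]
        have h2 : Order.succ (g omega1) ≤ (x : Ordinal) := hx.2
        exact absurd h1 (not_le.2 (Order.succ_le_iff.1 h2))
    have hEinj : Set.InjOn θ E := by
      intro x hx y hy hxy
      rcases lt_trichotomy (x : Ordinal) (y : Ordinal) with h | h | h
      · exact absurd (hkey x hx y hy hxy h) (fun h => h)
      · exact Subtype.ext h
      · exact absurd (hkey y hy x hx hxy.symm h) (fun h => h)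
    -- uncountability
    have hEunc : ¬E.Countable := by
      intro hEc
      obtain ⟨γ, hγ1, hγ2⟩ := MyAux.bound_of_countable
        ((Subtype.val '' E) ∩ Set.Iio omega1)
        ((hEc.image _).mono Set.inter_subset_left) Set.inter_subset_right
      obtain ⟨x, hx1, hx2, hx3, hx4⟩ := MyAux.club_unbounded g hg1 γ hγ1
      have hxE : (⟨x, Set.mem_Iic.2 hx2.le⟩ : Omega1') ∈ E := by
        refine ⟨(hSmem x).2 hx3, ?_⟩
        exact Order.succ_le_iff.2 hx4
      have : x ∈ (Subtype.val '' E) ∩ Set.Iio omega1 :=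
        ⟨⟨_, hxE, rfl⟩, hx2⟩
      exact absurd (hγ2 x this) (not_le.2 hx1)
    exact Or.inr ⟨⟨E, hEcl, hEunc, hEinj⟩, fun ⟨D, hDc, hDu, hDconst⟩ =>
      MyAux.exclusive θ D hDc hDu hDconst E hEcl hEunc hEinj⟩


end
end

section
/- If (X_j)_{j∈J} is a family of Hilbert-generated Banach spaces, then the c₀-direct sum (⊕_{j∈J} X_j)_{c₀} is Hilbert-generated. -/
open Set
open scoped ENNReal

noncomputable section

/-- A Banach space X is Hilbert-generated if there are a Hilbert space H and
a bounded operator from H onto a dense subspace of X. -/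
def IsHilbertGeneratedSpace (X : Type*) [NormedAddCommGroup X]
    [NormedSpace ℝ X] : Prop :=
  ∃ (H : Type) (_ : NormedAddCommGroup H) (_ : InnerProductSpace ℝ H)
    (_ : CompleteSpace H) (R : H →L[ℝ] X), DenseRange R

/-- The finitely supported elements of the ℓ∞-direct sum. -/
def finSuppSubmodule {J : Type*} (E : J → Type*)
    [∀ j, NormedAddCommGroup (E j)] [∀ j, NormedSpace ℝ (E j)] :
    Submodule ℝ (lp E ∞) where
  carrier := {x | {j | x j ≠ 0}.Finite}
  zero_mem' := by
    simp only [Set.mem_setOf_eq, lp.coeFn_zero, Pi.zero_apply, ne_eq,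
      not_true_eq_false]
    simp
  add_mem' := by
    intro x y hx hy
    refine (hx.union hy).subset fun j hj => ?_
    simp only [Set.mem_setOf_eq, lp.coeFn_add, Pi.add_apply, ne_eq] at hj
    by_contra hc
    simp only [Set.mem_union, Set.mem_setOf_eq, not_or, not_not] at hc
    exact hj (by rw [hc.1, hc.2, add_zero])
  smul_mem' := by
    intro c x hx
    refine hx.subset fun j hj => ?_
    simp only [Set.mem_setOf_eq, lp.coeFn_smul, Pi.smul_apply, ne_eq] at hj ⊢
    intro h
    exact hj (by simp [h])

/-- The c₀-direct sum of a family of Banach spaces: the closure, inside the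
ℓ∞-direct sum, of the finitely supported elements; equivalently, the families
(x_j) with {j : ‖x_j‖ ≥ ε} finite for every ε > 0, with the supremum norm. -/
def c0Sum {J : Type*} (E : J → Type*)
    [∀ j, NormedAddCommGroup (E j)] [∀ j, NormedSpace ℝ (E j)] :
    Submodule ℝ (lp E ∞) :=
  (finSuppSubmodule E).topologicalClosure

/-- If every member of a family of Banach spaces is Hilbert-generated, then
their c₀-direct sum is Hilbert-generated. -/
theorem c0Sum_hilbertGenerated {J : Type} (X : J → Type)
    [∀ j, NormedAddCommGroup (X j)] [∀ j, NormedSpace ℝ (X j)]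
    [∀ j, CompleteSpace (X j)]
    (h : ∀ j, IsHilbertGeneratedSpace (X j)) :
    IsHilbertGeneratedSpace ↥(c0Sum X) := by
  classical
  choose H nG iP cS T hT using h
  letI : ∀ j, NormedAddCommGroup (H j) := nG
  letI : ∀ j, InnerProductSpace ℝ (H j) := iP
  letI : ∀ j, NormedSpace ℝ (H j) := fun j => (iP j).toNormedSpace
  letI : ∀ j, CompleteSpace (H j) := cS
  set c : J → ℝ := fun j => (max 1 ‖T j‖)⁻¹ with hc
  have hmaxpos : ∀ j, (0:ℝ) < max 1 ‖T j‖ := fun j =>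
    lt_of_lt_of_le one_pos (le_max_left _ _)
  have hcpos : ∀ j, 0 < c j := fun j => inv_pos.2 (hmaxpos j)
  set S : ∀ j, H j →L[ℝ] X j := fun j => c j • T j with hS
  have hSapp : ∀ j (v : H j), S j v = c j • T j v := fun j v => rfl
  have hSnorm : ∀ j (v : H j), ‖S j v‖ ≤ ‖v‖ := by
    intro j v
    have h1 : ‖S j v‖ = c j * ‖T j v‖ := by
      rw [hSapp, norm_smul, Real.norm_eq_abs, abs_of_pos (hcpos j)]
    have h2 : ‖T j v‖ ≤ max 1 ‖T j‖ * ‖v‖ :=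
      ((T j).le_opNorm v).trans
        (mul_le_mul_of_nonneg_right (le_max_right _ _) (norm_nonneg _))
    calc ‖S j v‖ = c j * ‖T j v‖ := h1
      _ ≤ c j * (max 1 ‖T j‖ * ‖v‖) :=
        mul_le_mul_of_nonneg_left h2 (hcpos j).le
      _ = ‖v‖ := by
        rw [← mul_assoc, hc, inv_mul_cancel₀ (hmaxpos j).ne', one_mul]
  have hSd : ∀ j, DenseRange (S j) := by
    intro j
    have hsurj : Function.Surjective (fun x : X j => c j • x) :=
      (Homeomorph.smulOfNeZero (c j) (hcpos j).ne').surjective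
    have := hsurj.denseRange.comp (hT j)
      (Homeomorph.smulOfNeZero (c j) (hcpos j).ne').continuous
    have e : ⇑(S j) = fun x => c j • T j x := funext (hSapp j)
    rw [e]
    simpa [Function.comp_def] using this
  have hmem : ∀ f : lp H 2, Memℓp (fun j => S j (f j)) ∞ := by
    intro f
    apply memℓp_infty
    refine ⟨‖f‖, fun r hr => ?_⟩
    obtain ⟨j, rfl⟩ := hr
    exact (hSnorm j (f j)).trans
      (lp.norm_apply_le_norm (by norm_num) f j)
  let L : lp H 2 →ₗ[ℝ] lp X ∞ :=
    { toFun := fun f => ⟨fun j => S j (f j), hmem f⟩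
      map_add' := by
        intro f g
        apply lp.ext
        funext j
        show S j ((f + g) j) = S j (f j) + S j (g j)
        rw [lp.coeFn_add, Pi.add_apply, map_add]
      map_smul' := by
        intro a f
        apply lp.ext
        funext j
        show S j ((a • f) j) = a • S j (f j)
        rw [lp.coeFn_smul, Pi.smul_apply, map_smul] }
  have hLapp : ∀ (f : lp H 2) (j : J), (L f) j = S j (f j) := fun f j => rfl
  have hLbound : ∀ f : lp H 2, ‖L f‖ ≤ 1 * ‖f‖ := by
    intro f
    rw [one_mul]
    refine lp.norm_le_of_forall_le (norm_nonneg f) fun j => ?_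
    rw [hLapp]
    exact (hSnorm j (f j)).trans (lp.norm_apply_le_norm (by norm_num) f j)
  let Lc : lp H 2 →L[ℝ] lp X ∞ := L.mkContinuous 1 hLbound
  have hLcapp : ∀ (f : lp H 2) (j : J), (Lc f) j = S j (f j) := fun f j => rfl
  have hterm : ∀ (i : J) (a : H i), Lc (lp.single 2 i a) ∈ finSuppSubmodule X := by
    intro i a
    refine (Set.finite_singleton i).subset fun j hj => ?_
    simp only [Set.mem_setOf_eq] at hj
    by_contra hji
    apply hj
    rw [hLcapp, lp.single_apply_ne 2 i a (by simpa using hji), map_zero]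
  have hrange : ∀ f : lp H 2, Lc f ∈ c0Sum X := by
    intro f
    have hsum : HasSum (fun i => Lc (lp.single 2 i (f i))) (Lc f) :=
      (lp.hasSum_single (by norm_num) f).mapL Lc
    exact mem_closure_of_tendsto hsum
      (Filter.Eventually.of_forall fun s =>
        Submodule.sum_mem _ fun i _ => hterm i (f i))
  refine ⟨lp H 2, inferInstance, inferInstance, inferInstance,
    Lc.codRestrict (c0Sum X) hrange, ?_⟩
  intro y
  rw [closure_subtype]
  have himg : (Subtype.val '' Set.range (Lc.codRestrict (c0Sum X) hrange))
      = Set.range Lc := by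
    rw [← Set.range_comp]
    rfl
  rw [himg]
  have hkey : (finSuppSubmodule X : Set (lp X ∞)) ⊆ closure (Set.range Lc) := by
    intro x hx
    rw [Metric.mem_closure_iff]
    intro ε hε
    have hx' : {j | x j ≠ 0}.Finite := hx
    choose v hv using fun j =>
      Metric.denseRange_iff.1 (hSd j) (x j) (ε / 2) (by positivity)
    set s := hx'.toFinset with hs
    refine ⟨Lc (∑ i ∈ s, lp.single 2 i (v i)), Set.mem_range_self _, ?_⟩
    have happ : ∀ j : J, ((∑ i ∈ s, lp.single 2 i (v i) : lp H 2) : ∀ j, H j) j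
        = if j ∈ s then v j else 0 := by
      intro j
      simp only [lp.coeFn_sum, Finset.sum_apply, lp.single_apply,
        Finset.sum_dite_eq, Finset.sum_pi_single]
    have hbd : dist x (Lc (∑ i ∈ s, lp.single 2 i (v i))) ≤ ε / 2 := by
      rw [dist_eq_norm]
      refine lp.norm_le_of_forall_le (by positivity) fun j => ?_
      rw [lp.coeFn_sub, Pi.sub_apply, hLcapp, happ]
      by_cases hj : j ∈ s
      · rw [if_pos hj]
        have := hv j
        rw [dist_eq_norm] at this
        exact this.le
      · rw [if_neg hj]
        have hxj : x j = 0 := by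
          by_contra hne
          exact hj (hx'.mem_toFinset.2 hne)
        rw [hxj, map_zero, sub_zero, norm_zero]
        positivity
    exact lt_of_le_of_lt hbd (by linarith)
  have hyc : (y : lp X ∞) ∈ closure (finSuppSubmodule X : Set (lp X ∞)) := y.2
  exact closure_minimal hkey isClosed_closure hyc


end
end
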